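/- Let C be a bialgebra with a projection onto a Hopf algebra H (bialgebra maps i: H → C, π: C → H, π∘i = id_H) and Π = id_C ⋆ (i∘S∘π), i.e., Π(c) = c₁ i(S(π(c₂))). Then (C, Π, Π) is a Rota-Baxter bialgebra of weight (−1, −1): Π satisfies both the Rota-Baxter algebra identity of weight −1 and the Rota-Baxter coalgebra identity of weight −1. -/

import Mathlib

open TensorProduct LinearMap

/-- Rota--Baxter coalgebra of weight `γ`:
`Q(c₁)⊗Q(c₂) = Q(c)₁⊗Q(Q(c)₂) + Q(Q(c)₁)⊗Q(c)₂ + γ Q(c)₁⊗Q(c)₂`. -/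
def IsRotaBaxterCoalgebra (K : Type*) [Field K] {C : Type*} [AddCommGroup C] [Module K C]
    (D : C →ₗ[K] C ⊗[K] C) (Q : C →ₗ[K] C) (γ : K) : Prop :=
  TensorProduct.map Q Q ∘ₗ D =
    lTensor C Q ∘ₗ D ∘ₗ Q + rTensor C Q ∘ₗ D ∘ₗ Q + γ • (D ∘ₗ Q)

open Coalgebra


section Aux
variable {K : Type*} [CommSemiring K]

lemma aux_counit_smul_right {C : Type*} [AddCommMonoid C] [Module K C] [Coalgebra K C]
    {a : C} {ι : Type*} (r : Repr K a ι) :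
    ∑ i ∈ r.index, counit (R := K) (r.left i) • r.right i = a := by
  calc ∑ i ∈ r.index, counit (R := K) (r.left i) • r.right i
      = TensorProduct.lid K C (∑ i ∈ r.index, counit (R := K) (r.left i) ⊗ₜ r.right i) := by
        rw [map_sum]; simp
    _ = TensorProduct.lid K C ((1 : K) ⊗ₜ a) := by rw [Coalgebra.sum_counit_tmul_eq r]
    _ = a := by simp

lemma aux_counit_smul_left {C : Type*} [AddCommMonoid C] [Module K C] [Coalgebra K C]
    {a : C} {ι : Type*} (r : Repr K a ι) :
    ∑ i ∈ r.index, counit (R := K) (r.right i) • r.left i = a := by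
  calc ∑ i ∈ r.index, counit (R := K) (r.right i) • r.left i
      = TensorProduct.rid K C (∑ i ∈ r.index, r.left i ⊗ₜ counit (R := K) (r.right i)) := by
        rw [map_sum]; simp
    _ = TensorProduct.rid K C (a ⊗ₜ (1 : K)) := by rw [Coalgebra.sum_tmul_counit_eq r]
    _ = a := by simp

lemma aux_sum_trans {C V : Type*} [AddCommMonoid C] [Module K C] [Coalgebra K C]
    [AddCommMonoid V] [Module K V]
    {a : C} {ι κ Λ : Type*} (r : Repr K a ι) (L : ∀ i : r.ι, Repr K (r.left i) κ) (R : ∀ i : r.ι, Repr K (r.right i) Λ)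
    (φ : C ⊗[K] (C ⊗[K] C) →ₗ[K] V) :
    ∑ i ∈ r.index, ∑ j ∈ (L i).index,
      φ ((L i).left j ⊗ₜ ((L i).right j ⊗ₜ r.right i)) =
    ∑ i ∈ r.index, ∑ k ∈ (R i).index,
      φ (r.left i ⊗ₜ ((R i).left k ⊗ₜ (R i).right k)) := by
  have h := congrArg φ (Coalgebra.sum_tmul_tmul_eq r L R)
  simpa [map_sum] using h

/-- product of two representations -/
def mulRepr {C : Type*} [Semiring C] [Bialgebra K C] {a b : C}
    {ι κ : Type*} (ra : Repr K a ι) (rb : Repr K b κ) : Repr K (a * b) (ι × κ) where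
  index := ra.index ×ˢ rb.index
  left := fun p => ra.left p.1 * rb.left p.2
  right := fun p => ra.right p.1 * rb.right p.2
  eq := by
    rw [Bialgebra.comul_mul, ← ra.eq, ← rb.eq, Finset.sum_mul_sum]
    rw [Finset.sum_product]
    simp [Algebra.TensorProduct.tmul_mul_tmul]

lemma sum_mulRepr {C : Type*} [Semiring C] [Bialgebra K C] {a b : C} {V : Type*}
    [AddCommMonoid V] {ι κ : Type*} (ra : Repr K a ι) (rb : Repr K b κ) (g : C → C → V) :
    (∑ p ∈ (mulRepr ra rb).index, g ((mulRepr ra rb).left p) ((mulRepr ra rb).right p))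
      = ∑ s ∈ ra.index, ∑ t ∈ rb.index, g (ra.left s * rb.left t) (ra.right s * rb.right t) := by
  show (∑ p ∈ ra.index ×ˢ rb.index,
    g (ra.left p.1 * rb.left p.2) (ra.right p.1 * rb.right p.2)) = _
  rw [Finset.sum_product]

@[simp] lemma mulRepr_index {C : Type*} [Semiring C] [Bialgebra K C] {a b : C}
    {ι κ : Type*} (ra : Repr K a ι) (rb : Repr K b κ) : (mulRepr ra rb).index = ra.index ×ˢ rb.index := rfl
@[simp] lemma mulRepr_left {C : Type*} [Semiring C] [Bialgebra K C] {a b : C}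
    {ι κ : Type*} (ra : Repr K a ι) (rb : Repr K b κ) (p) : (mulRepr ra rb).left p = ra.left p.1 * rb.left p.2 := rfl
@[simp] lemma mulRepr_right {C : Type*} [Semiring C] [Bialgebra K C] {a b : C}
    {ι κ : Type*} (ra : Repr K a ι) (rb : Repr K b κ) (p) : (mulRepr ra rb).right p = ra.right p.1 * rb.right p.2 := rfl

end Aux


section Hopf
variable {K : Type*} [CommSemiring K] {H : Type*} [Semiring H] [HopfAlgebra K H]

local notation "𝑺" => HopfAlgebra.antipode (R := K) (A := H)

lemma aux_antipode_one : 𝑺 (1 : H) = 1 := by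
  have h := HopfAlgebra.mul_antipode_rTensor_comul_apply (R := K) (1 : H)
  simpa [Bialgebra.comul_one, Algebra.TensorProduct.one_def] using h

lemma aux_antipode_algebraMap (x : K) : 𝑺 (algebraMap K H x) = algebraMap K H x := by
  rw [Algebra.algebraMap_eq_smul_one, map_smul, aux_antipode_one]

lemma aux_counit_antipode (a : H) : counit (R := K) (𝑺 a) = counit (R := K) a := by
  have h := congrArg (counit (R := K)) (HopfAlgebra.sum_antipode_mul_eq_algebraMap_counit (R := K) (ℛ K a))
  rw [map_sum, Bialgebra.counit_algebraMap] at h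
  calc counit (R := K) (𝑺 a) = counit (R := K) (𝑺 (∑ i ∈ (ℛ K a).index,
        counit (R := K) ((ℛ K a).right i) • (ℛ K a).left i)) := by
        rw [aux_counit_smul_left (ℛ K a)]
    _ = ∑ i ∈ (ℛ K a).index, counit (R := K) (𝑺 ((ℛ K a).left i)) * counit (R := K) ((ℛ K a).right i) := by
        rw [map_sum, map_sum]
        refine Finset.sum_congr rfl fun i _ => ?_
        rw [map_smul, map_smul, smul_eq_mul, mul_comm]
    _ = counit (R := K) a := by
        rw [← h]
        exact Finset.sum_congr rfl fun i _ => by rw [Bialgebra.counit_mul]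


lemma aux_antipode_mul (a b : H) : 𝑺 (a * b) = 𝑺 b * 𝑺 a := by
  classical
  set ra := ℛ K a with hra
  set rb := ℛ K b with hrb
  set Ra : ∀ i : ra.ι, Repr K (ra.right i) _ := fun i => ℛ K (ra.right i) with hRa
  set Rb : ∀ j : rb.ι, Repr K (rb.right j) _ := fun j => ℛ K (rb.right j) with hRb
  set La : ∀ i : ra.ι, Repr K (ra.left i) _ := fun i => ℛ K (ra.left i) with hLa
  set Lb : ∀ j : rb.ι, Repr K (rb.left j) _ := fun j => ℛ K (rb.left j) with hLb
  have collapse_b : ∀ (i : ra.ι) (k : (Ra i).ι) (j : rb.ι),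
      (∑ l ∈ (Rb j).index,
        𝑺 (ra.left i * rb.left j) *
          ((Ra i).left k * ((Rb j).left l * (𝑺 ((Rb j).right l) * 𝑺 ((Ra i).right k)))))
      = counit (R := K) (rb.right j) •
          (𝑺 (ra.left i * rb.left j) * ((Ra i).left k * 𝑺 ((Ra i).right k))) := by
    intro i k j
    rw [← Finset.mul_sum, ← Finset.mul_sum]
    have h1 : (∑ l ∈ (Rb j).index, (Rb j).left l * (𝑺 ((Rb j).right l) * 𝑺 ((Ra i).right k)))
        = (∑ l ∈ (Rb j).index, (Rb j).left l * 𝑺 ((Rb j).right l)) * 𝑺 ((Ra i).right k) := by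
      rw [Finset.sum_mul]; exact Finset.sum_congr rfl fun l _ => (mul_assoc _ _ _).symm
    rw [h1, HopfAlgebra.sum_mul_antipode_eq_algebraMap_counit (Rb j), ← Algebra.smul_def, mul_smul_comm,
      mul_smul_comm]
  have claim1 :
      (∑ i ∈ ra.index, ∑ j ∈ rb.index, ∑ k ∈ (Ra i).index, ∑ l ∈ (Rb j).index,
        𝑺 (ra.left i * rb.left j) *
          ((Ra i).left k * ((Rb j).left l * (𝑺 ((Rb j).right l) * 𝑺 ((Ra i).right k)))))
      = 𝑺 (a * b) := by
    calc (∑ i ∈ ra.index, ∑ j ∈ rb.index, ∑ k ∈ (Ra i).index, ∑ l ∈ (Rb j).index,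
        𝑺 (ra.left i * rb.left j) *
          ((Ra i).left k * ((Rb j).left l * (𝑺 ((Rb j).right l) * 𝑺 ((Ra i).right k)))))
        = ∑ i ∈ ra.index, ∑ j ∈ rb.index, counit (R := K) (rb.right j) •
            (counit (R := K) (ra.right i) • 𝑺 (ra.left i * rb.left j)) := by
          refine Finset.sum_congr rfl fun i _ => Finset.sum_congr rfl fun j _ => ?_
          rw [Finset.sum_congr rfl fun k (_ : k ∈ (Ra i).index) => collapse_b i k j,
            ← Finset.smul_sum]
          congr 1
          rw [← Finset.mul_sum, HopfAlgebra.sum_mul_antipode_eq_algebraMap_counit (Ra i),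
            ← Algebra.commutes, ← Algebra.smul_def]
      _ = ∑ i ∈ ra.index, counit (R := K) (ra.right i) • 𝑺 (ra.left i * b) := by
          refine Finset.sum_congr rfl fun i _ => ?_
          rw [Finset.sum_congr rfl fun j (_ : j ∈ rb.index) =>
              smul_comm (counit (R := K) (rb.right j)) (counit (R := K) (ra.right i))
                (𝑺 (ra.left i * rb.left j)),
            ← Finset.smul_sum]
          congr 1
          calc (∑ j ∈ rb.index, counit (R := K) (rb.right j) • 𝑺 (ra.left i * rb.left j))
              = ∑ j ∈ rb.index, 𝑺 (ra.left i * (counit (R := K) (rb.right j) • rb.left j)) := by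
                refine Finset.sum_congr rfl fun j _ => ?_
                rw [mul_smul_comm, map_smul]
            _ = 𝑺 (ra.left i * ∑ j ∈ rb.index, counit (R := K) (rb.right j) • rb.left j) := by
                rw [Finset.mul_sum, map_sum]
            _ = 𝑺 (ra.left i * b) := by rw [aux_counit_smul_left rb]
      _ = 𝑺 (a * b) := by
          calc (∑ i ∈ ra.index, counit (R := K) (ra.right i) • 𝑺 (ra.left i * b))
              = ∑ i ∈ ra.index, 𝑺 ((counit (R := K) (ra.right i) • ra.left i) * b) := by
                refine Finset.sum_congr rfl fun i _ => ?_
                rw [smul_mul_assoc, map_smul]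
            _ = 𝑺 ((∑ i ∈ ra.index, counit (R := K) (ra.right i) • ra.left i) * b) := by
                rw [Finset.sum_mul, map_sum]
            _ = 𝑺 (a * b) := by rw [aux_counit_smul_left ra]
  rw [← claim1]
  -- now prove the middle term equals 𝑺 b * 𝑺 a
  have step2 :
      (∑ i ∈ ra.index, ∑ j ∈ rb.index, ∑ k ∈ (Ra i).index, ∑ l ∈ (Rb j).index,
        𝑺 (ra.left i * rb.left j) *
          ((Ra i).left k * ((Rb j).left l * (𝑺 ((Rb j).right l) * 𝑺 ((Ra i).right k)))))
      = ∑ i ∈ ra.index, ∑ k ∈ (Ra i).index, ∑ j ∈ rb.index, ∑ l ∈ (Lb j).index,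
        𝑺 (ra.left i * (Lb j).left l) *
          ((Ra i).left k * ((Lb j).right l * (𝑺 (rb.right j) * 𝑺 ((Ra i).right k)))) := by
    rw [Finset.sum_congr rfl fun i (_ : i ∈ ra.index) =>
      Finset.sum_comm (s := rb.index) (t := (Ra i).index)]
    refine Finset.sum_congr rfl fun i _ => Finset.sum_congr rfl fun k _ => ?_
    have htrans := (aux_sum_trans rb Lb Rb
      (mul' K H ∘ₗ TensorProduct.map (𝑺 ∘ₗ mulLeft K (ra.left i))
        (mulLeft K ((Ra i).left k) ∘ₗ mul' K H ∘ₗ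
          TensorProduct.map LinearMap.id (mulRight K (𝑺 ((Ra i).right k)) ∘ₗ 𝑺)))).symm
    simpa [mul'_apply] using htrans
  rw [step2]
  have step3 :
      (∑ i ∈ ra.index, ∑ k ∈ (Ra i).index, ∑ j ∈ rb.index, ∑ l ∈ (Lb j).index,
        𝑺 (ra.left i * (Lb j).left l) *
          ((Ra i).left k * ((Lb j).right l * (𝑺 (rb.right j) * 𝑺 ((Ra i).right k)))))
      = ∑ j ∈ rb.index, ∑ l ∈ (Lb j).index, ∑ i ∈ ra.index, ∑ k ∈ (La i).index,
        𝑺 ((La i).left k * (Lb j).left l) *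
          ((La i).right k * ((Lb j).right l * (𝑺 (rb.right j) * 𝑺 (ra.right i)))) := by
    rw [Finset.sum_congr rfl fun i (_ : i ∈ ra.index) =>
      Finset.sum_comm (s := (Ra i).index) (t := rb.index)]
    rw [Finset.sum_comm (s := ra.index) (t := rb.index)]
    refine Finset.sum_congr rfl fun j _ => ?_
    rw [Finset.sum_congr rfl fun i (_ : i ∈ ra.index) =>
      Finset.sum_comm (s := (Ra i).index) (t := (Lb j).index)]
    rw [Finset.sum_comm (s := ra.index) (t := (Lb j).index)]
    refine Finset.sum_congr rfl fun l _ => ?_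
    have htrans := (aux_sum_trans ra La Ra
      (mul' K H ∘ₗ TensorProduct.map (𝑺 ∘ₗ mulRight K ((Lb j).left l))
        (mul' K H ∘ₗ TensorProduct.map LinearMap.id
          (mulLeft K ((Lb j).right l) ∘ₗ mulLeft K (𝑺 (rb.right j)) ∘ₗ 𝑺)))).symm
    simpa [mul'_apply] using htrans
  rw [step3]
  have collapse2 : ∀ (j : rb.ι) (i : ra.ι),
      (∑ l ∈ (Lb j).index, ∑ k ∈ (La i).index,
        𝑺 ((La i).left k * (Lb j).left l) *
          ((La i).right k * ((Lb j).right l * (𝑺 (rb.right j) * 𝑺 (ra.right i)))))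
      = (counit (R := K) (ra.left i) * counit (R := K) (rb.left j)) •
          (𝑺 (rb.right j) * 𝑺 (ra.right i)) := by
    intro j i
    calc (∑ l ∈ (Lb j).index, ∑ k ∈ (La i).index,
        𝑺 ((La i).left k * (Lb j).left l) *
          ((La i).right k * ((Lb j).right l * (𝑺 (rb.right j) * 𝑺 (ra.right i)))))
        = ∑ k ∈ (La i).index, ∑ l ∈ (Lb j).index,
            (𝑺 ((La i).left k * (Lb j).left l) * ((La i).right k * (Lb j).right l)) *
              (𝑺 (rb.right j) * 𝑺 (ra.right i)) := by
          rw [Finset.sum_comm]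
          refine Finset.sum_congr rfl fun k _ => Finset.sum_congr rfl fun l _ => ?_
          simp only [mul_assoc]
      _ = (∑ p ∈ (La i).index ×ˢ (Lb j).index,
            𝑺 ((La i).left p.1 * (Lb j).left p.2) * ((La i).right p.1 * (Lb j).right p.2)) *
              (𝑺 (rb.right j) * 𝑺 (ra.right i)) := by
          rw [Finset.sum_mul, Finset.sum_product]
      _ = (counit (R := K) (ra.left i) * counit (R := K) (rb.left j)) •
            (𝑺 (rb.right j) * 𝑺 (ra.right i)) := by
          have h : (∑ p ∈ (La i).index ×ˢ (Lb j).index,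
              𝑺 ((La i).left p.1 * (Lb j).left p.2) * ((La i).right p.1 * (Lb j).right p.2))
              = algebraMap K H (counit (R := K) (ra.left i) * counit (R := K) (rb.left j)) := by
            have h0 := HopfAlgebra.sum_antipode_mul_eq_algebraMap_counit (R := K) (mulRepr (La i) (Lb j))
            rw [Bialgebra.counit_mul] at h0
            exact h0
          rw [h, ← Algebra.smul_def]
  calc (∑ j ∈ rb.index, ∑ l ∈ (Lb j).index, ∑ i ∈ ra.index, ∑ k ∈ (La i).index,
        𝑺 ((La i).left k * (Lb j).left l) *
          ((La i).right k * ((Lb j).right l * (𝑺 (rb.right j) * 𝑺 (ra.right i)))))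
      = ∑ j ∈ rb.index, ∑ i ∈ ra.index,
          (counit (R := K) (ra.left i) * counit (R := K) (rb.left j)) •
            (𝑺 (rb.right j) * 𝑺 (ra.right i)) := by
        refine Finset.sum_congr rfl fun j _ => ?_
        rw [Finset.sum_comm]
        exact Finset.sum_congr rfl fun i _ => collapse2 j i
    _ = ∑ j ∈ rb.index, counit (R := K) (rb.left j) •
          (𝑺 (rb.right j) * ∑ i ∈ ra.index, counit (R := K) (ra.left i) • 𝑺 (ra.right i)) := by
        refine Finset.sum_congr rfl fun j _ => ?_
        rw [Finset.mul_sum, Finset.smul_sum]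
        refine Finset.sum_congr rfl fun i _ => ?_
        rw [mul_smul_comm, smul_smul, mul_comm]
    _ = 𝑺 b * 𝑺 a := by
        have ha : (∑ i ∈ ra.index, counit (R := K) (ra.left i) • 𝑺 (ra.right i)) = 𝑺 a := by
          simp only [← map_smul]
          rw [← map_sum, aux_counit_smul_right ra]
        rw [ha]
        have hb : (∑ j ∈ rb.index, counit (R := K) (rb.left j) • (𝑺 (rb.right j) * 𝑺 a))
            = (∑ j ∈ rb.index, counit (R := K) (rb.left j) • 𝑺 (rb.right j)) * 𝑺 a := by
          rw [Finset.sum_mul]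
          exact Finset.sum_congr rfl fun j _ => (smul_mul_assoc _ _ _).symm
        rw [hb]
        have hb2 : (∑ j ∈ rb.index, counit (R := K) (rb.left j) • 𝑺 (rb.right j)) = 𝑺 b := by
          simp only [← map_smul]
          rw [← map_sum, aux_counit_smul_right rb]
        rw [hb2]

/-- The "swapped antipode comultiplication" map `c ↦ ∑ S(c₂) ⊗ S(c₁)`. -/
noncomputable def Gs : H →ₗ[K] H ⊗[K] H :=
  (TensorProduct.comm K H H).toLinearMap ∘ₗ
    TensorProduct.map (HopfAlgebra.antipode (R := K)) (HopfAlgebra.antipode (R := K)) ∘ₗ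
      Coalgebra.comul (R := K)

lemma Gs_apply_repr {c : H} {ι : Type*} (ρ : Repr K c ι) :
    Gs (K := K) c = ∑ m ∈ ρ.index, 𝑺 (ρ.right m) ⊗ₜ 𝑺 (ρ.left m) := by
  rw [Gs, comp_apply, comp_apply, ← ρ.eq, map_sum, map_sum]
  simp

lemma aux_FG' {c : H} {ι : Type*} (ρ : Repr K c ι) :
    (∑ k ∈ ρ.index, Coalgebra.comul (R := K) (ρ.left k) * Gs (K := K) (ρ.right k))
      = counit (R := K) c • (1 : H ⊗[K] H) := by
  classical
  set L : ∀ k : ρ.ι, Repr K (ρ.left k) _ := fun k => ℛ K (ρ.left k) with hL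
  set R : ∀ k : ρ.ι, Repr K (ρ.right k) _ := fun k => ℛ K (ρ.right k) with hR
  set Q : ∀ (k : ρ.ι) (m : (R k).ι), Repr K ((R k).right m) _ :=
    fun k m => ℛ K ((R k).right m) with hQ
  set U : ∀ (k : ρ.ι) (m : (R k).ι), Repr K ((R k).left m) _ :=
    fun k m => ℛ K ((R k).left m) with hU
  have step1 :
      (∑ k ∈ ρ.index, Coalgebra.comul (R := K) (ρ.left k) * Gs (K := K) (ρ.right k))
      = ∑ k ∈ ρ.index, ∑ m ∈ (R k).index,
          (ρ.left k ⊗ₜ (R k).left m) * Gs (K := K) ((R k).right m) := by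
    have htrans := aux_sum_trans ρ L R
      (mul' K (H ⊗[K] H) ∘ₗ TensorProduct.map LinearMap.id (Gs (K := K)) ∘ₗ
        (TensorProduct.assoc K H H H).symm.toLinearMap)
    simp only [comp_apply, LinearEquiv.coe_coe, TensorProduct.assoc_symm_tmul,
      TensorProduct.map_tmul, LinearMap.id_coe, id_eq, mul'_apply] at htrans
    rw [← htrans]
    refine Finset.sum_congr rfl fun k _ => ?_
    rw [← Finset.sum_mul, (L k).eq]
  have step2 : ∀ k : ρ.ι,
      (∑ m ∈ (R k).index, (ρ.left k ⊗ₜ[K] (R k).left m) * Gs (K := K) ((R k).right m))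
      = (ρ.left k * 𝑺 (ρ.right k)) ⊗ₜ[K] 1 := by
    intro k
    have htrans := aux_sum_trans (R k) (U k) (Q k)
      (TensorProduct.map (mulLeft K (ρ.left k) ∘ₗ HopfAlgebra.antipode (R := K))
          (mul' K H ∘ₗ TensorProduct.map LinearMap.id (HopfAlgebra.antipode (R := K))) ∘ₗ
        (TensorProduct.comm K (H ⊗[K] H) H).toLinearMap ∘ₗ
        (TensorProduct.assoc K H H H).symm.toLinearMap)
    simp only [comp_apply, LinearEquiv.coe_coe, TensorProduct.assoc_symm_tmul,
      TensorProduct.comm_tmul, TensorProduct.map_tmul, LinearMap.id_coe, id_eq,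
      mul'_apply, mulLeft_apply] at htrans
    calc (∑ m ∈ (R k).index, (ρ.left k ⊗ₜ[K] (R k).left m) * Gs (K := K) ((R k).right m))
        = ∑ m ∈ (R k).index, ∑ n ∈ (Q k m).index,
            (ρ.left k * 𝑺 ((Q k m).right n)) ⊗ₜ[K] ((R k).left m * 𝑺 ((Q k m).left n)) := by
          refine Finset.sum_congr rfl fun m _ => ?_
          rw [Gs_apply_repr (Q k m), Finset.mul_sum]
          refine Finset.sum_congr rfl fun n _ => ?_
          rw [Algebra.TensorProduct.tmul_mul_tmul]
      _ = ∑ m ∈ (R k).index, ∑ n ∈ (U k m).index,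
            (ρ.left k * 𝑺 ((R k).right m)) ⊗ₜ[K] ((U k m).left n * 𝑺 ((U k m).right n)) := by
          rw [← htrans]
      _ = ∑ m ∈ (R k).index, counit (R := K) ((R k).left m) •
            ((ρ.left k * 𝑺 ((R k).right m)) ⊗ₜ[K] (1 : H)) := by
          refine Finset.sum_congr rfl fun m _ => ?_
          rw [← TensorProduct.tmul_sum, HopfAlgebra.sum_mul_antipode_eq_algebraMap_counit (U k m),
            Algebra.algebraMap_eq_smul_one, TensorProduct.tmul_smul]
      _ = (ρ.left k * 𝑺 (ρ.right k)) ⊗ₜ[K] 1 := by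
          have hx : ∀ x : H, (ρ.left k * 𝑺 x) ⊗ₜ[K] (1 : H) =
              (((TensorProduct.mk K H H).flip 1) ∘ₗ mulLeft K (ρ.left k) ∘ₗ
                HopfAlgebra.antipode (R := K)) x := by intro x; rfl
          simp only [hx, ← map_smul, ← map_sum]
          rw [aux_counit_smul_right (R k)]
  calc (∑ k ∈ ρ.index, Coalgebra.comul (R := K) (ρ.left k) * Gs (K := K) (ρ.right k))
      = ∑ k ∈ ρ.index, (ρ.left k * 𝑺 (ρ.right k)) ⊗ₜ[K] (1 : H) := by
        rw [step1]; exact Finset.sum_congr rfl fun k _ => step2 k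
    _ = counit (R := K) c • (1 : H ⊗[K] H) := by
        rw [← TensorProduct.sum_tmul, HopfAlgebra.sum_mul_antipode_eq_algebraMap_counit ρ]
        simp [Algebra.TensorProduct.one_def, Algebra.algebraMap_eq_smul_one,
          TensorProduct.smul_tmul']

lemma aux_comul_antipode (a : H) :
    Coalgebra.comul (R := K) (𝑺 a) =
      (TensorProduct.comm K H H) (TensorProduct.map (HopfAlgebra.antipode (R := K))
        (HopfAlgebra.antipode (R := K)) (Coalgebra.comul (R := K) a)) := by
  classical
  set ra := ℛ K a with hra
  set Ra : ∀ i : ra.ι, Repr K (ra.right i) _ := fun i => ℛ K (ra.right i) with hRa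
  set La : ∀ i : ra.ι, Repr K (ra.left i) _ := fun i => ℛ K (ra.left i) with hLa
  have claimB :
      (∑ i ∈ ra.index, ∑ k ∈ (Ra i).index,
        Coalgebra.comul (R := K) (𝑺 (ra.left i)) *
          (Coalgebra.comul (R := K) ((Ra i).left k) * Gs (K := K) ((Ra i).right k)))
      = Coalgebra.comul (R := K) (𝑺 a) := by
    calc (∑ i ∈ ra.index, ∑ k ∈ (Ra i).index,
        Coalgebra.comul (R := K) (𝑺 (ra.left i)) *
          (Coalgebra.comul (R := K) ((Ra i).left k) * Gs (K := K) ((Ra i).right k)))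
        = ∑ i ∈ ra.index, counit (R := K) (ra.right i) •
            Coalgebra.comul (R := K) (𝑺 (ra.left i)) := by
          refine Finset.sum_congr rfl fun i _ => ?_
          rw [← Finset.mul_sum, aux_FG' (Ra i), mul_smul_comm, mul_one]
      _ = Coalgebra.comul (R := K) (𝑺 a) := by
          have hx : ∀ x : H, Coalgebra.comul (R := K) (𝑺 x) =
              (Coalgebra.comul (R := K) ∘ₗ HopfAlgebra.antipode (R := K)) x := fun x => rfl
          simp only [hx, ← map_smul, ← map_sum]
          rw [aux_counit_smul_left ra]
  have claimA :
      (∑ i ∈ ra.index, ∑ k ∈ (Ra i).index,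
        Coalgebra.comul (R := K) (𝑺 (ra.left i)) *
          (Coalgebra.comul (R := K) ((Ra i).left k) * Gs (K := K) ((Ra i).right k)))
      = Gs (K := K) a := by
    have htrans := (aux_sum_trans ra La Ra
      (mul' K (H ⊗[K] H) ∘ₗ TensorProduct.map
        (Coalgebra.comul (R := K) ∘ₗ HopfAlgebra.antipode (R := K))
        (mul' K (H ⊗[K] H) ∘ₗ TensorProduct.map (Coalgebra.comul (R := K)) (Gs (K := K))))).symm
    simp only [comp_apply, TensorProduct.map_tmul, mul'_apply] at htrans
    calc (∑ i ∈ ra.index, ∑ k ∈ (Ra i).index,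
        Coalgebra.comul (R := K) (𝑺 (ra.left i)) *
          (Coalgebra.comul (R := K) ((Ra i).left k) * Gs (K := K) ((Ra i).right k)))
        = ∑ i ∈ ra.index, ∑ j ∈ (La i).index,
            Coalgebra.comul (R := K) (𝑺 ((La i).left j)) *
              (Coalgebra.comul (R := K) ((La i).right j) * Gs (K := K) (ra.right i)) := by
          rw [htrans]
      _ = ∑ i ∈ ra.index, counit (R := K) (ra.left i) • Gs (K := K) (ra.right i) := by
          refine Finset.sum_congr rfl fun i _ => ?_
          have hgrp : ∀ j, Coalgebra.comul (R := K) (𝑺 ((La i).left j)) *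
              (Coalgebra.comul (R := K) ((La i).right j) * Gs (K := K) (ra.right i))
              = Coalgebra.comul (R := K) (𝑺 ((La i).left j) * (La i).right j) *
                  Gs (K := K) (ra.right i) := by
            intro j
            rw [Bialgebra.comul_mul, mul_assoc]
          rw [Finset.sum_congr rfl fun j _ => hgrp j, ← Finset.sum_mul, ← map_sum,
            HopfAlgebra.sum_antipode_mul_eq_algebraMap_counit (La i), Bialgebra.comul_algebraMap,
            Algebra.smul_def]
      _ = Gs (K := K) a := by
          simp only [← map_smul, ← map_sum]
          rw [aux_counit_smul_right ra]
  rw [← claimB, claimA, Gs]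
  simp

end Hopf

section Proj
variable {K : Type*} [Field K] {H : Type*} [Ring H] [HopfAlgebra K H]
  {C : Type*} [Ring C] [Bialgebra K C]

/-- The map `E = i ∘ S ∘ π`. -/
noncomputable def Emap (i : H →ₐc[K] C) (π : C →ₐc[K] H) : C →ₗ[K] C :=
  i.toLinearMap ∘ₗ HopfAlgebra.antipode (R := K) ∘ₗ π.toLinearMap

/-- `Π = id ⋆ E`. -/
noncomputable def PiMap (i : H →ₐc[K] C) (π : C →ₐc[K] H) : C →ₗ[K] C :=
  mul' K C ∘ₗ lTensor C (Emap i π) ∘ₗ Coalgebra.comul (R := K)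

variable (i : H →ₐc[K] C) (π : C →ₐc[K] H)

lemma Emap_apply (c : C) : Emap i π c = i (HopfAlgebra.antipode (R := K) (π c)) := rfl

lemma Emap_mul (x y : C) : Emap i π (x * y) = Emap i π y * Emap i π x := by
  simp only [Emap_apply, map_mul, aux_antipode_mul]

lemma counit_Emap (c : C) : counit (R := K) (Emap i π c) = counit (R := K) c := by
  rw [Emap_apply, CoalgHomClass.counit_comp_apply i, aux_counit_antipode,
    CoalgHomClass.counit_comp_apply π]

lemma Emap_i (hπi : ∀ h : H, π (i h) = h) (h : H) :
    Emap i π (i h) = i (HopfAlgebra.antipode (R := K) h) := by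
  rw [Emap_apply, hπi]

lemma comul_Emap_repr {c : C} {ι : Type*} (r : Repr K c ι) :
    Coalgebra.comul (R := K) (Emap i π c) =
      ∑ m ∈ r.index, Emap i π (r.right m) ⊗ₜ Emap i π (r.left m) := by
  rw [Emap_apply]
  rw [← CoalgHomClass.map_comp_comul_apply i, aux_comul_antipode]
  rw [← CoalgHomClass.map_comp_comul_apply π, ← r.eq]
  simp [Emap_apply]

lemma PiMap_repr {c : C} {ι : Type*} (r : Repr K c ι) :
    PiMap i π c = ∑ m ∈ r.index, r.left m * Emap i π (r.right m) := by
  rw [PiMap, comp_apply, comp_apply, ← r.eq, map_sum, map_sum]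
  simp [mul'_apply]

lemma pi_PiMap (hπi : ∀ h : H, π (i h) = h) (c : C) :
    π (PiMap i π c) = algebraMap K H (counit (R := K) c) := by
  have r := ℛ K c
  rw [PiMap_repr i π (ℛ K c), map_sum]
  have h := HopfAlgebra.sum_mul_antipode_eq_algebraMap_counit (R := K) ((ℛ K c).induced π)
  rw [CoalgHomClass.counit_comp_apply π] at h
  rw [← h]
  refine Finset.sum_congr rfl fun m _ => ?_
  rw [map_mul, Emap_apply, hπi]
  simp [Coalgebra.Repr.induced]

lemma Emap_PiMap (hπi : ∀ h : H, π (i h) = h) (c : C) :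
    Emap i π (PiMap i π c) = algebraMap K C (counit (R := K) c) := by
  rw [Emap_apply, pi_PiMap i π hπi, aux_antipode_algebraMap, AlgHomClass.commutes]

lemma PiMap_absorb (hπi : ∀ h : H, π (i h) = h) (a : C) (h : H) :
    PiMap i π (a * i h) = counit (R := K) h • PiMap i π a := by
  classical
  set ra := ℛ K a
  set rh := ℛ K h
  rw [PiMap_repr i π (mulRepr ra (rh.induced i)),
    sum_mulRepr ra (rh.induced i) (fun u v => u * Emap i π v)]
  calc (∑ s ∈ ra.index, ∑ t ∈ (rh.induced i).index,
        (ra.left s * (rh.induced i).left t) * Emap i π (ra.right s * (rh.induced i).right t))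
      = ∑ s ∈ ra.index, ∑ t ∈ rh.index,
          ra.left s * ((i (rh.left t) * i (HopfAlgebra.antipode (R := K) (rh.right t))) *
            Emap i π (ra.right s)) := by
        refine Finset.sum_congr rfl fun s _ => Finset.sum_congr rfl fun t _ => ?_
        simp only [Coalgebra.Repr.induced_left, Coalgebra.Repr.induced_right,
          Function.comp_apply]
        rw [Emap_mul, Emap_i i π hπi, mul_assoc, mul_assoc]
    _ = ∑ s ∈ ra.index, counit (R := K) h • (ra.left s * Emap i π (ra.right s)) := by
        refine Finset.sum_congr rfl fun s _ => ?_
        rw [← Finset.mul_sum, ← Finset.sum_mul]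
        have hsum : (∑ t ∈ rh.index, i (rh.left t) * i (HopfAlgebra.antipode (R := K) (rh.right t)))
            = algebraMap K C (counit (R := K) h) := by
          have h1 := HopfAlgebra.sum_mul_antipode_eq_algebraMap_counit (R := K) rh
          calc (∑ t ∈ rh.index, i (rh.left t) * i (HopfAlgebra.antipode (R := K) (rh.right t)))
              = i (∑ t ∈ rh.index, rh.left t * HopfAlgebra.antipode (R := K) (rh.right t)) := by
                rw [map_sum]; exact Finset.sum_congr rfl fun t _ => (map_mul i _ _).symm
            _ = algebraMap K C (counit (R := K) h) := by rw [h1, AlgHomClass.commutes]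
        rw [hsum, ← Algebra.smul_def, mul_smul_comm]
    _ = counit (R := K) h • PiMap i π a := by
        rw [← Finset.smul_sum, PiMap_repr i π ra]

lemma PiMap_mul (a b : C) {ι : Type*} (r : Repr K a ι) :
    PiMap i π (a * b) = ∑ m ∈ r.index, (r.left m * PiMap i π b) * Emap i π (r.right m) := by
  classical
  set rb := ℛ K b
  rw [PiMap_repr i π (mulRepr r rb), sum_mulRepr r rb (fun u v => u * Emap i π v)]
  refine Finset.sum_congr rfl fun s _ => ?_
  calc (∑ t ∈ rb.index, (r.left s * rb.left t) * Emap i π (r.right s * rb.right t))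
      = ∑ t ∈ rb.index, r.left s * ((rb.left t * Emap i π (rb.right t)) * Emap i π (r.right s)) := by
        refine Finset.sum_congr rfl fun t _ => ?_
        rw [Emap_mul]; simp only [mul_assoc]
    _ = (r.left s * PiMap i π b) * Emap i π (r.right s) := by
        rw [← Finset.mul_sum, ← Finset.sum_mul, PiMap_repr i π rb, mul_assoc]

lemma PiMap_fact1 (hπi : ∀ h : H, π (i h) = h) (x y : C) :
    PiMap i π (x * PiMap i π y) = PiMap i π (x * y) := by
  classical
  set ry := ℛ K y
  calc PiMap i π (x * PiMap i π y)
      = ∑ t ∈ ry.index, PiMap i π ((x * ry.left t) * i (HopfAlgebra.antipode (R := K) (π (ry.right t)))) := by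
        rw [PiMap_repr i π ry, Finset.mul_sum, map_sum]
        exact Finset.sum_congr rfl fun t _ => by rw [Emap_apply, mul_assoc]
    _ = ∑ t ∈ ry.index, counit (R := K) (ry.right t) • PiMap i π (x * ry.left t) := by
        refine Finset.sum_congr rfl fun t _ => ?_
        rw [PiMap_absorb i π hπi, aux_counit_antipode, CoalgHomClass.counit_comp_apply π]
    _ = PiMap i π (x * y) := by
        have : ∀ t, counit (R := K) (ry.right t) • PiMap i π (x * ry.left t)
            = PiMap i π (x * (counit (R := K) (ry.right t) • ry.left t)) := by
          intro t; rw [mul_smul_comm, map_smul]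
        rw [Finset.sum_congr rfl fun t _ => this t, ← map_sum, ← Finset.mul_sum,
          aux_counit_smul_left ry]
end Proj

section Proj2
variable {K : Type*} [Field K] {H : Type*} [Ring H] [HopfAlgebra K H]
  {C : Type*} [Ring C] [Bialgebra K C]
  (i : H →ₐc[K] C) (π : C →ₐc[K] H)

lemma formB (x : C) {ι κ Λ : Type*} (r : Repr K x ι) (L : ∀ m : r.ι, Repr K (r.left m) κ)
    (R : ∀ m : r.ι, Repr K (r.right m) Λ) :
    Coalgebra.comul (R := K) (PiMap i π x) =
      ∑ m ∈ r.index, ∑ j ∈ (L m).index, ∑ k ∈ (R m).index,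
        ((L m).left j * Emap i π ((R m).right k)) ⊗ₜ
          ((L m).right j * Emap i π ((R m).left k)) := by
  rw [PiMap_repr i π r, map_sum]
  refine Finset.sum_congr rfl fun m _ => ?_
  rw [Bialgebra.comul_mul, comul_Emap_repr i π (R m), ← (L m).eq, Finset.sum_mul_sum]
  refine Finset.sum_congr rfl fun j _ => Finset.sum_congr rfl fun k _ => ?_
  rw [Algebra.TensorProduct.tmul_mul_tmul]

lemma formStar (x : C) {ι Λ : Type*} (r : Repr K x ι) (R : ∀ m : r.ι, Repr K (r.right m) Λ) :
    Coalgebra.comul (R := K) (PiMap i π x) =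
      ∑ m ∈ r.index, ∑ k ∈ (R m).index,
        (r.left m * Emap i π ((R m).right k)) ⊗ₜ PiMap i π ((R m).left k) := by
  classical
  set L : ∀ m : r.ι, Repr K (r.left m) _ := fun m => ℛ K (r.left m) with hL
  set T : ∀ (m : r.ι) (k : (R m).ι), Repr K ((R m).right k) _ :=
    fun m k => ℛ K ((R m).right k) with hT
  set M : ∀ (m : r.ι) (k : (R m).ι), Repr K ((R m).left k) _ :=
    fun m k => ℛ K ((R m).left k) with hM
  have step1 : Coalgebra.comul (R := K) (PiMap i π x) =
      ∑ m ∈ r.index, ∑ k ∈ (R m).index,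
        (r.left m ⊗ₜ (R m).left k) * Coalgebra.comul (R := K) (Emap i π ((R m).right k)) := by
    have htrans := aux_sum_trans r L R
      (mul' K (C ⊗[K] C) ∘ₗ TensorProduct.map LinearMap.id
        (Coalgebra.comul (R := K) ∘ₗ Emap i π) ∘ₗ
        (TensorProduct.assoc K C C C).symm.toLinearMap)
    simp only [comp_apply, LinearEquiv.coe_coe, TensorProduct.assoc_symm_tmul,
      TensorProduct.map_tmul, LinearMap.id_coe, id_eq, mul'_apply] at htrans
    rw [← htrans, PiMap_repr i π r, map_sum]
    refine Finset.sum_congr rfl fun m _ => ?_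
    rw [Bialgebra.comul_mul, ← Finset.sum_mul, (L m).eq]
  rw [step1]
  refine Finset.sum_congr rfl fun m _ => ?_
  have htrans2 := aux_sum_trans (R m) (M m) (T m)
    (TensorProduct.map (mulLeft K (r.left m) ∘ₗ Emap i π)
        (mul' K C ∘ₗ lTensor C (Emap i π)) ∘ₗ
      (TensorProduct.comm K (C ⊗[K] C) C).toLinearMap ∘ₗ
      (TensorProduct.assoc K C C C).symm.toLinearMap)
  simp only [comp_apply, LinearEquiv.coe_coe, TensorProduct.assoc_symm_tmul,
    TensorProduct.comm_tmul, TensorProduct.map_tmul, LinearMap.id_coe, id_eq,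
    mul'_apply, mulLeft_apply, lTensor_tmul] at htrans2
  calc (∑ k ∈ (R m).index,
        (r.left m ⊗ₜ[K] (R m).left k) * Coalgebra.comul (R := K) (Emap i π ((R m).right k)))
      = ∑ k ∈ (R m).index, ∑ n ∈ (T m k).index,
          (r.left m * Emap i π ((T m k).right n)) ⊗ₜ[K] ((R m).left k * Emap i π ((T m k).left n)) := by
        refine Finset.sum_congr rfl fun k _ => ?_
        rw [comul_Emap_repr i π (T m k), Finset.mul_sum]
        refine Finset.sum_congr rfl fun n _ => ?_
        rw [Algebra.TensorProduct.tmul_mul_tmul]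
    _ = ∑ k ∈ (R m).index, ∑ n ∈ (M m k).index,
          (r.left m * Emap i π ((R m).right k)) ⊗ₜ[K] ((M m k).left n * Emap i π ((M m k).right n)) := by
        rw [← htrans2]
    _ = ∑ k ∈ (R m).index,
          (r.left m * Emap i π ((R m).right k)) ⊗ₜ[K] PiMap i π ((R m).left k) := by
        refine Finset.sum_congr rfl fun k _ => ?_
        rw [← TensorProduct.tmul_sum, ← PiMap_repr i π (M m k)]

lemma formDagger (x : C) {ι κ : Type*} (r : Repr K x ι) (L : ∀ m : r.ι, Repr K (r.left m) κ) :
    Coalgebra.comul (R := K) (PiMap i π x) =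
      ∑ m ∈ r.index, ∑ j ∈ (L m).index,
        ((L m).left j * Emap i π (r.right m)) ⊗ₜ PiMap i π ((L m).right j) := by
  classical
  set R : ∀ m : r.ι, Repr K (r.right m) _ := fun m => ℛ K (r.right m) with hR
  have htrans := (aux_sum_trans r L R
    (TensorProduct.map (mul' K C ∘ₗ lTensor C (Emap i π)) (PiMap i π) ∘ₗ
      (TensorProduct.assoc K C C C).symm.toLinearMap ∘ₗ
      lTensor C (TensorProduct.comm K C C).toLinearMap)).symm
  simp only [comp_apply, LinearEquiv.coe_coe, TensorProduct.assoc_symm_tmul,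
    TensorProduct.comm_tmul, TensorProduct.map_tmul, lTensor_tmul,
    mul'_apply] at htrans
  rw [formStar i π x r R, htrans]

lemma coinv (hπi : ∀ h : H, π (i h) = h) (x : C) :
    lTensor C π.toLinearMap (Coalgebra.comul (R := K) (PiMap i π x)) =
      PiMap i π x ⊗ₜ (1 : H) := by
  classical
  set r := ℛ K x with hr
  set R : ∀ m : r.ι, Repr K (r.right m) _ := fun m => ℛ K (r.right m) with hR
  rw [formStar i π x r R, map_sum]
  calc (∑ m ∈ r.index, lTensor C π.toLinearMap (∑ k ∈ (R m).index,
        (r.left m * Emap i π ((R m).right k)) ⊗ₜ PiMap i π ((R m).left k)))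
      = ∑ m ∈ r.index, ∑ k ∈ (R m).index, counit (R := K) ((R m).left k) •
          (((TensorProduct.mk K C H).flip 1 ∘ₗ mulLeft K (r.left m) ∘ₗ Emap i π)
            ((R m).right k)) := by
        refine Finset.sum_congr rfl fun m _ => ?_
        rw [map_sum]
        refine Finset.sum_congr rfl fun k _ => ?_
        rw [lTensor_tmul]
        rw [show π.toLinearMap (PiMap i π ((R m).left k)) = π (PiMap i π ((R m).left k)) from rfl,
          pi_PiMap i π hπi, Algebra.algebraMap_eq_smul_one, TensorProduct.tmul_smul]
        rfl
    _ = ∑ m ∈ r.index, (r.left m * Emap i π (r.right m)) ⊗ₜ (1 : H) := by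
        refine Finset.sum_congr rfl fun m _ => ?_
        simp only [← map_smul]
        rw [← map_sum, aux_counit_smul_right (R m)]
        simp [TensorProduct.mk_apply]
    _ = PiMap i π x ⊗ₜ (1 : H) := by
        rw [← TensorProduct.sum_tmul, ← PiMap_repr i π r]

lemma g2 (hπi : ∀ h : H, π (i h) = h) (x : C) :
    lTensor C (Emap i π) (Coalgebra.comul (R := K) (PiMap i π x)) =
      PiMap i π x ⊗ₜ (1 : C) := by
  have hE : Emap i π = (i.toLinearMap ∘ₗ HopfAlgebra.antipode (R := K)) ∘ₗ π.toLinearMap := rfl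
  rw [hE, lTensor_comp, comp_apply, coinv i π hπi, lTensor_tmul]
  rw [show (i.toLinearMap ∘ₗ HopfAlgebra.antipode (R := K)) (1 : H) = i 1 by
    rw [comp_apply, aux_antipode_one]; rfl, map_one]

lemma PiMap_fact2 (hπi : ∀ h : H, π (i h) = h) (x y : C) :
    PiMap i π (PiMap i π x * y) = PiMap i π x * PiMap i π y := by
  classical
  set ρ := ℛ K (PiMap i π x) with hρ
  set W : C ⊗[K] C →ₗ[K] C := mul' K C ∘ₗ rTensor C (mulRight K (PiMap i π y)) with hW
  have hG := congrArg W (g2 i π hπi x)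
  calc PiMap i π (PiMap i π x * y)
      = ∑ s ∈ ρ.index, (ρ.left s * PiMap i π y) * Emap i π (ρ.right s) :=
        PiMap_mul i π _ y ρ
    _ = W (lTensor C (Emap i π) (Coalgebra.comul (R := K) (PiMap i π x))) := by
        rw [← ρ.eq, map_sum, map_sum]
        simp [hW, mul'_apply]
    _ = PiMap i π x * PiMap i π y := by
        rw [hG, hW]
        simp [mul'_apply]

lemma c1 (hπi : ∀ h : H, π (i h) = h) (x : C) :
    lTensor C (PiMap i π) (Coalgebra.comul (R := K) (PiMap i π x)) =
      Coalgebra.comul (R := K) (PiMap i π x) := by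
  classical
  set r := ℛ K x with hr
  set L : ∀ m : r.ι, Repr K (r.left m) _ := fun m => ℛ K (r.left m) with hL
  set R : ∀ m : r.ι, Repr K (r.right m) _ := fun m => ℛ K (r.right m) with hR
  conv_lhs => rw [formB i π x r L R]
  calc lTensor C (PiMap i π) (∑ m ∈ r.index, ∑ j ∈ (L m).index, ∑ k ∈ (R m).index,
        ((L m).left j * Emap i π ((R m).right k)) ⊗ₜ
          ((L m).right j * Emap i π ((R m).left k)))
      = ∑ m ∈ r.index, ∑ j ∈ (L m).index, ∑ k ∈ (R m).index,
          counit (R := K) ((R m).left k) •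
            ((((TensorProduct.mk K C C).flip (PiMap i π ((L m).right j))) ∘ₗ
              mulLeft K ((L m).left j) ∘ₗ Emap i π) ((R m).right k)) := by
        rw [map_sum]
        refine Finset.sum_congr rfl fun m _ => ?_
        rw [map_sum]
        refine Finset.sum_congr rfl fun j _ => ?_
        rw [map_sum]
        refine Finset.sum_congr rfl fun k _ => ?_
        rw [lTensor_tmul]
        have habs : PiMap i π ((L m).right j * Emap i π ((R m).left k))
            = counit (R := K) ((R m).left k) • PiMap i π ((L m).right j) := by
          rw [Emap_apply, PiMap_absorb i π hπi, aux_counit_antipode,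
            CoalgHomClass.counit_comp_apply π]
        rw [habs, TensorProduct.tmul_smul]
        rfl
    _ = ∑ m ∈ r.index, ∑ j ∈ (L m).index,
          ((L m).left j * Emap i π (r.right m)) ⊗ₜ PiMap i π ((L m).right j) := by
        refine Finset.sum_congr rfl fun m _ => Finset.sum_congr rfl fun j _ => ?_
        simp only [← map_smul]
        rw [← map_sum, aux_counit_smul_right (R m)]
        simp [TensorProduct.mk_apply]
    _ = Coalgebra.comul (R := K) (PiMap i π x) := (formDagger i π x r L).symm

lemma c2 (hπi : ∀ h : H, π (i h) = h) (x : C) :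
    rTensor C (PiMap i π) (Coalgebra.comul (R := K) (PiMap i π x)) =
      TensorProduct.map (PiMap i π) (PiMap i π) (Coalgebra.comul (R := K) x) := by
  classical
  set r := ℛ K x with hr
  set R : ∀ m : r.ι, Repr K (r.right m) _ := fun m => ℛ K (r.right m) with hR
  conv_lhs => rw [formStar i π x r R]
  calc rTensor C (PiMap i π) (∑ m ∈ r.index, ∑ k ∈ (R m).index,
        (r.left m * Emap i π ((R m).right k)) ⊗ₜ PiMap i π ((R m).left k))
      = ∑ m ∈ r.index, ∑ k ∈ (R m).index, counit (R := K) ((R m).right k) •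
          (((TensorProduct.mk K C C (PiMap i π (r.left m))) ∘ₗ PiMap i π) ((R m).left k)) := by
        rw [map_sum]
        refine Finset.sum_congr rfl fun m _ => ?_
        rw [map_sum]
        refine Finset.sum_congr rfl fun k _ => ?_
        rw [rTensor_tmul]
        have habs : PiMap i π (r.left m * Emap i π ((R m).right k))
            = counit (R := K) ((R m).right k) • PiMap i π (r.left m) := by
          rw [Emap_apply, PiMap_absorb i π hπi, aux_counit_antipode,
            CoalgHomClass.counit_comp_apply π]
        rw [habs, ← TensorProduct.smul_tmul']
        rfl
    _ = ∑ m ∈ r.index, PiMap i π (r.left m) ⊗ₜ PiMap i π (r.right m) := by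
        refine Finset.sum_congr rfl fun m _ => ?_
        simp only [← map_smul]
        rw [← map_sum, aux_counit_smul_left (R m)]
        simp [TensorProduct.mk_apply]
    _ = TensorProduct.map (PiMap i π) (PiMap i π) (Coalgebra.comul (R := K) x) := by
        rw [← r.eq, map_sum]
        simp

end Proj2

theorem bialgebraWithProjection_rotaBaxterBialgebra
    (K : Type*) [Field K]
    (H : Type*) [Ring H] [HopfAlgebra K H]
    (C : Type*) [Ring C] [Bialgebra K C]
    (i : H →ₐc[K] C) (π : C →ₐc[K] H) (hπi : ∀ h : H, π (i h) = h)
    -- Π = id_C ⋆ (i ∘ S ∘ π), i.e. Π(c) = c₁ i(S(π(c₂)))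
    (Pi : C →ₗ[K] C)
    (hPi : Pi = LinearMap.mul' K C ∘ₗ
      lTensor C (i.toLinearMap ∘ₗ HopfAlgebra.antipode (R := K) ∘ₗ π.toLinearMap) ∘ₗ
        Coalgebra.comul (R := K)) :
    (∀ x y : C, Pi x * Pi y = Pi (x * Pi y) + Pi (Pi x * y) - Pi (x * y)) ∧
    IsRotaBaxterCoalgebra K (Coalgebra.comul (R := K)) Pi (-1) := by
  have hP : Pi = PiMap i π := hPi
  subst hP
  constructor
  · intro x y
    rw [PiMap_fact1 i π hπi, PiMap_fact2 i π hπi, add_sub_cancel_left]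
  · show TensorProduct.map (PiMap i π) (PiMap i π) ∘ₗ Coalgebra.comul (R := K) =
      lTensor C (PiMap i π) ∘ₗ Coalgebra.comul (R := K) ∘ₗ PiMap i π +
      rTensor C (PiMap i π) ∘ₗ Coalgebra.comul (R := K) ∘ₗ PiMap i π +
      (-1 : K) • (Coalgebra.comul (R := K) ∘ₗ PiMap i π)
    refine LinearMap.ext fun x => ?_
    simp only [comp_apply, LinearMap.add_apply, LinearMap.smul_apply]
    rw [c1 i π hπi x, c2 i π hπi x, neg_smul, one_smul]
    abel
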